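/- Let (F,v) be a henselian valued field whose residue field Fv has characteristic p > 0. Assume: (i) (F,v) is defectless, i.e. for every finite field extension L/F and every valuation w on L extending v one has [L:F] = (w(L^×) : v(F^×)) · [Lw : Fv], where (w(L^×) : v(F^×)) is the index of value groups and Lw is the residue field of w; (ii) the value group v(F^×) is p-divisible; (iii) every finite field extension of Fv has degree prime to p. Then every finite field extension of F has degree prime to p. -/

import Mathlib

open IsLocalRing

namespace Paper

variable {K L : Type} [Field K] [Field L]

/-- The ring homomorphism `A →+* B` induced by `f : K →+* L` when `B.comap f = A`. -/
def inducedHom (f : K →+* L) (A : ValuationSubring K) (B : ValuationSubring L)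
    (h : B.comap f = A) : A →+* B where
  toFun a := ⟨f a, by
    have ha : (a : K) ∈ B.comap f := by rw [h]; exact a.2
    exact ValuationSubring.mem_comap.mp ha⟩
  map_one' := Subtype.ext (map_one f)
  map_mul' x y := Subtype.ext (map_mul f x.1 y.1)
  map_zero' := Subtype.ext (map_zero f)
  map_add' x y := Subtype.ext (map_add f x.1 y.1)

theorem isLocalHom_inducedHom (f : K →+* L) (A : ValuationSubring K) (B : ValuationSubring L)
    (h : B.comap f = A) : IsLocalHom (inducedHom f A B h) := by
  constructor
  intro a ha
  have hane : (a : K) ≠ 0 := by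
    intro h0
    have hz : (inducedHom f A B h) a = 0 := by
      apply Subtype.ext
      show f (a : K) = 0
      rw [h0, map_zero]
    rw [hz] at ha
    exact not_isUnit_zero ha
  have hinvB : f ((a : K)⁻¹) ∈ B := by
    obtain ⟨u, hu⟩ := ha
    have h1 : ((u⁻¹ : Bˣ) : B) * (inducedHom f A B h a) = 1 := by rw [← hu]; exact u.inv_mul
    have h2 : (((u⁻¹ : Bˣ) : B) : L) * f (a : K) = 1 := congrArg Subtype.val h1
    have h3 : f ((a : K)⁻¹) = (((u⁻¹ : Bˣ) : B) : L) := by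
      rw [map_inv₀]
      exact inv_eq_of_mul_eq_one_right (by rw [mul_comm]; exact h2)
    rw [h3]
    exact (((u⁻¹ : Bˣ) : B)).2
  have hinv : (a : K)⁻¹ ∈ A := by
    have hc : (a : K)⁻¹ ∈ B.comap f := ValuationSubring.mem_comap.mpr hinvB
    rwa [h] at hc
  apply IsUnit.of_mul_eq_one (a := a) ⟨(a : K)⁻¹, hinv⟩
  apply Subtype.ext
  show (a : K) * (a : K)⁻¹ = 1
  exact mul_inv_cancel₀ hane

/-- Residue field map induced when `B.comap f = A`. -/
noncomputable def residueMap (f : K →+* L) (A : ValuationSubring K) (B : ValuationSubring L)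
    (h : B.comap f = A) : ResidueField A →+* ResidueField B :=
  letI := isLocalHom_inducedHom f A B h
  ResidueField.map (inducedHom f A B h)

/-- The ramification index `(v(L^×) : v(K^×))` for an extension of valued fields:
the index of the subgroup of `Lˣ` generated by the image of `Kˣ` together with the
units of the valuation subring `B` of `L`. -/
noncomputable def ramIdx (f : K →+* L) (B : ValuationSubring L) : ℕ :=
  ((Units.map f.toMonoidHom).range ⊔ B.unitGroup).index

/-- The residue degree `[Lv : Kv]` for an extension of valued fields. -/
noncomputable def resDeg (f : K →+* L) (A : ValuationSubring K) (B : ValuationSubring L)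
    (h : B.comap f = A) : ℕ :=
  letI := (residueMap f A B h).toAlgebra
  Module.finrank (ResidueField A) (ResidueField B)

/-- A valued field `(K, A)` is defectless if for every finite field extension `L/K` and
every valuation subring `B` of `L` lying over `A`, the fundamental equality
`[L : K] = (v(L^×) : v(K^×)) · [Lv : Kv]` holds. -/
def IsDefectless (A : ValuationSubring K) : Prop :=
  ∀ (L' : Type) [Field L'] [Algebra K L'] [FiniteDimensional K L']
    (B : ValuationSubring L') (h : B.comap (algebraMap K L') = A),
    Module.finrank K L' = ramIdx (algebraMap K L') B * resDeg (algebraMap K L') A B h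

/-- The value group `v(K^×)` is `p`-divisible. -/
def PDivisibleValueGroup (p : ℕ) (A : ValuationSubring K) : Prop :=
  ∀ x : Kˣ, ∃ y : Kˣ, x / y ^ p ∈ A.unitGroup

/-- The valuation is roughly `p`-divisible: every `γ` with `-v(p) ≤ γ ≤ v(p)` lies in `pΓ`. -/
def RoughlyPDivisible (p : ℕ) (A : ValuationSubring K) : Prop :=
  p ≠ 0 → ∀ x : Kˣ, ((p : K) * (x : K) ∈ A ∧ (p : K) / (x : K) ∈ A) →
    ∃ y : Kˣ, x / y ^ p ∈ A.unitGroup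

/-- Every finite field extension of the residue field has degree prime to `p`. -/
def ResidueFiniteExtPrimeTo (p : ℕ) (A : ValuationSubring K) : Prop :=
  ∀ (k : Type) [Field k] [Algebra (ResidueField A) k] [FiniteDimensional (ResidueField A) k],
    Nat.Coprime p (Module.finrank (ResidueField A) k)

/-- `(K, A)` is a model of `T₁` with residue characteristic `p`. -/
def IsT1Model (p : ℕ) (A : ValuationSubring K) : Prop :=
  HenselianLocalRing A ∧ IsDefectless A ∧ PerfectField K ∧ PerfectField (ResidueField A) ∧
    CharP (ResidueField A) p ∧ RoughlyPDivisible p A ∧ ResidueFiniteExtPrimeTo p A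
/- STATEMENT 2: A henselian defectless valued field with residue characteristic p > 0,
p-divisible value group, and all finite extensions of the residue field of degree prime
to p, has all finite field extensions of degree prime to p. -/
lemma mem_unitGroup_iff' (A : ValuationSubring K) (x : Kˣ) :
    x ∈ A.unitGroup ↔ (x : K) ∈ A ∧ ((x : K))⁻¹ ∈ A := by
  rw [ValuationSubring.mem_unitGroup_iff]
  constructor
  · intro h
    refine ⟨?_, ?_⟩
    · rw [← ValuationSubring.valuation_le_one_iff, h]
    · rw [← ValuationSubring.valuation_le_one_iff, map_inv₀, h, inv_one]
  · rintro ⟨h1, h2⟩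
    rw [← ValuationSubring.valuation_le_one_iff] at h1 h2
    rw [map_inv₀] at h2
    refine le_antisymm h1 ?_
    have hx0 : (x : K) ≠ 0 := Units.ne_zero x
    have h3 : (1 : _) = A.valuation (x : K) * (A.valuation (x : K))⁻¹ := by
      rw [← map_inv₀, ← map_mul, mul_inv_cancel₀ hx0, map_one]
    calc (1 : _) = A.valuation (x : K) * (A.valuation (x : K))⁻¹ := h3
      _ ≤ A.valuation (x : K) * 1 := mul_le_mul_right h2 _
      _ = A.valuation (x : K) := mul_one _

lemma unitGroup_of_pow_mem (A : ValuationSubring K) (t : Kˣ) (n : ℕ) (hn : n ≠ 0)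
    (h : t ^ n ∈ A.unitGroup) : t ∈ A.unitGroup := by
  rw [mem_unitGroup_iff'] at h ⊢
  have hcoe : ((t ^ n : Kˣ) : K) = (t : K) ^ n := Units.val_pow_eq_pow_val t n
  rw [hcoe] at h
  obtain ⟨h1, h2⟩ := h
  have hne : (t : K) ≠ 0 := Units.ne_zero t
  have hkey : ∀ a : K, a ≠ 0 → a ^ n ∈ A → (a ^ n)⁻¹ ∈ A → a ∈ A → a⁻¹ ∈ A := by
    intro a ha h1 h2 h3
    have : a⁻¹ = a ^ (n - 1) * (a ^ n)⁻¹ := by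
      field_simp
      rw [← pow_succ', Nat.sub_add_cancel (Nat.one_le_iff_ne_zero.mpr hn)]
    rw [this]
    exact A.mul_mem _ _ (A.pow_mem h3 _) h2
  rcases A.mem_or_inv_mem (t : K) with ht | ht
  · exact ⟨ht, hkey _ hne h1 h2 ht⟩
  · refine ⟨?_, ht⟩
    have := hkey (t : K)⁻¹ (by simp [hne]) (by rw [inv_pow]; exact h2)
      (by rw [inv_pow, inv_inv]; exact h1) ht
    rwa [inv_inv] at this

lemma exists_comap_eq (A : ValuationSubring K) {L : Type} [Field L] (g : K →+* L) :
    ∃ B : ValuationSubring L, B.comap g = A := by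
  obtain ⟨B, hmem, hloc⟩ := IsLocalRing.exists_factor_valuationRing (g.comp A.subtype)
  refine ⟨B, ?_⟩
  ext x
  simp only [ValuationSubring.mem_comap]
  constructor
  · intro hx
    rcases A.mem_or_inv_mem x with h | h
    · exact h
    · by_cases hx0 : x = 0
      · rw [hx0]; exact A.zero_mem
      have hUnit : IsUnit ((g.comp A.subtype).codRestrict B.toSubring hmem ⟨x⁻¹, h⟩) := by
        apply IsUnit.of_mul_eq_one (⟨g x, hx⟩ : B.toSubring)
        apply Subtype.ext
        show g x⁻¹ * g x = 1
        rw [← map_mul, inv_mul_cancel₀ hx0, map_one]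
      have hA : IsUnit (⟨x⁻¹, h⟩ : A) := hloc.1 _ hUnit
      obtain ⟨u, hu⟩ := hA
      have h2 : ((u⁻¹ : Aˣ) : A) * ⟨x⁻¹, h⟩ = 1 := by rw [← hu]; exact u.inv_mul
      have h3 : (((u⁻¹ : Aˣ) : A) : K) * x⁻¹ = 1 := congrArg Subtype.val h2
      have h4 : x = (((u⁻¹ : Aˣ) : A) : K) := ((mul_inv_eq_one₀ hx0).mp h3).symm
      rw [h4]; exact ((u⁻¹ : Aˣ) : A).2
  · intro hx
    exact hmem ⟨x, hx⟩

set_option maxHeartbeats 1000000 in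
theorem finite_ext_degree_prime_to_p
    {F : Type} [Field F] (A : ValuationSubring F) [HenselianLocalRing A]
    (p : ℕ) (hp : p.Prime) [CharP (ResidueField A) p]
    (hdef : IsDefectless A)
    (hdiv : PDivisibleValueGroup p A)
    (hres : ResidueFiniteExtPrimeTo p A) :
    ∀ (L : Type) [Field L] [Algebra F L] [FiniteDimensional F L],
      Nat.Coprime p (Module.finrank F L) := by
  intro L _ _ _
  obtain ⟨B, hB⟩ := exists_comap_eq A (algebraMap F L)
  have heq := hdef L B hB
  have hpos : 0 < Module.finrank F L := Module.finrank_pos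
  -- residue degree is coprime to p
  have hr : Nat.Coprime p (resDeg (algebraMap F L) A B hB) := by
    have hne : resDeg (algebraMap F L) A B hB ≠ 0 := by
      intro h0
      rw [h0, mul_zero] at heq
      omega
    have h5 : resDeg (algebraMap F L) A B hB =
        letI := (residueMap (algebraMap F L) A B hB).toAlgebra
        Module.finrank (ResidueField A) (ResidueField B) := rfl
    rw [h5] at hne ⊢
    letI := (residueMap (algebraMap F L) A B hB).toAlgebra
    haveI : FiniteDimensional (ResidueField A) (ResidueField B) :=
      FiniteDimensional.of_finrank_pos (Nat.pos_of_ne_zero hne)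
    exact hres (ResidueField B)
  -- ramification index is coprime to p
  have hram : Nat.Coprime p (ramIdx (algebraMap F L) B) := by
    have hne : ramIdx (algebraMap F L) B ≠ 0 := by
      intro h0
      rw [h0, zero_mul] at heq
      omega
    rw [hp.coprime_iff_not_dvd]
    intro hdvd
    unfold ramIdx at hne hdvd
    set g := algebraMap F L with hg
    set H := (Units.map g.toMonoidHom).range ⊔ B.unitGroup with hH
    haveI : Finite (Lˣ ⧸ H) := Nat.finite_of_card_ne_zero hne
    haveI : Fact p.Prime := ⟨hp⟩
    rw [Subgroup.index] at hdvd
    obtain ⟨q, hq⟩ := exists_prime_orderOf_dvd_card' p hdvd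
    obtain ⟨u, rfl⟩ := QuotientGroup.mk_surjective q
    have hup : u ^ p ∈ H := by
      have h1 : (QuotientGroup.mk u : Lˣ ⧸ H) ^ p = 1 := by
        rw [← hq]; exact pow_orderOf_eq_one _
      rwa [← QuotientGroup.mk_pow, QuotientGroup.eq_one_iff] at h1
    obtain ⟨y, hy, z, hz, hyz⟩ := Subgroup.mem_sup.mp hup
    obtain ⟨x, rfl⟩ := hy
    obtain ⟨w, hw⟩ := hdiv x
    set t := u / Units.map g.toMonoidHom w with ht
    have hmapmem : ∀ s : Fˣ, s ∈ A.unitGroup → Units.map g.toMonoidHom s ∈ B.unitGroup := by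
      intro s hs
      rw [mem_unitGroup_iff'] at hs ⊢
      obtain ⟨hs1, hs2⟩ := hs
      rw [← hB] at hs1 hs2
      constructor
      · exact ValuationSubring.mem_comap.mp hs1
      · show (g (s : F))⁻¹ ∈ B
        rw [← map_inv₀]
        exact ValuationSubring.mem_comap.mp hs2
    have htp : t ^ p ∈ B.unitGroup := by
      have h2 : t ^ p = Units.map g.toMonoidHom (x / w ^ p) * z := by
        rw [ht, div_pow, map_div, map_pow, ← hyz]
        group
        exact mul_div_right_comm _ _ _
      rw [h2]
      exact B.unitGroup.mul_mem (hmapmem _ hw) hz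
    have htu : t ∈ B.unitGroup := unitGroup_of_pow_mem B t p hp.ne_zero htp
    have huH : u ∈ H := by
      have h3 : u = t * Units.map g.toMonoidHom w := by
        rw [ht, div_mul_cancel]
      rw [h3]
      exact H.mul_mem (Subgroup.mem_sup_right htu)
        (Subgroup.mem_sup_left ⟨w, rfl⟩)
    have h4 : (QuotientGroup.mk u : Lˣ ⧸ H) = 1 := (QuotientGroup.eq_one_iff u).mpr huH
    rw [h4, orderOf_one] at hq
    exact hp.one_lt.ne hq
  rw [heq]
  exact Nat.Coprime.mul_right hram hr


end Paper
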